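/- Consider the action of K = SU(3) × SU(3) on the Cayley plane OP² (realized as rank-1 projectors among octonion-hermitian 3×3 matrices), where the first factor acts as Aut_ℂ(𝕆) ≅ SU(3) entrywise on matrix entries and the second factor acts by X ↦ gXg⁻¹. Then the orbit of the projector q = diag(0,0,1) is the complex projective plane ℂP² ⊆ OP² (the projectors with all entries in ℂ), and the stabilizer K_q is isomorphic to SU(3) × U(2), consisting of pairs (Y₁, diag-block(Y₂, y)) with Y₁ ∈ SU(3), Y₂ ∈ U(2), y = conj(det Y₂). -/

import Mathlib

/-! A minimal construction of the real Cayley (octonion) algebra `𝕆` via the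
Cayley–Dickson doubling of the quaternions, together with hermitian `3 × 3`
octonion matrices. -/

/-- The octonions, as pairs of quaternions (Cayley–Dickson construction). -/
structure Oct where
  a : Quaternion ℝ
  b : Quaternion ℝ

namespace Oct

def octEquiv : Oct ≃ (Quaternion ℝ × Quaternion ℝ) :=
  ⟨fun o => (o.a, o.b), fun p => ⟨p.1, p.2⟩, fun _ => rfl, fun _ => rfl⟩

noncomputable instance : AddCommGroup Oct := octEquiv.addCommGroup

/-- Cayley–Dickson multiplication. -/
noncomputable instance : Mul Oct :=
  ⟨fun x y => ⟨x.a * y.a - star y.b * x.b, y.b * x.a + x.b * star y.a⟩⟩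

noncomputable instance : One Oct := ⟨⟨1, 0⟩⟩

/-- Octonion conjugation. -/
noncomputable instance : Star Oct := ⟨fun x => ⟨star x.a, -x.b⟩⟩

/-- The canonical embedding of the reals. -/
noncomputable def ofReal (x : ℝ) : Oct := ⟨(x : Quaternion ℝ), 0⟩

/-- The imaginary unit `j`. -/
noncomputable def jO : Oct := ⟨⟨0, 0, 1, 0⟩, 0⟩

/-- The imaginary unit `ℓ`. -/
noncomputable def lO : Oct := ⟨0, 1⟩

/-- The real part of an octonion. -/
def re (x : Oct) : ℝ := x.a.re

end Oct

/-- Product of `3 × 3` octonion matrices. -/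
noncomputable def omul3 (X Y : Matrix (Fin 3) (Fin 3) Oct) : Matrix (Fin 3) (Fin 3) Oct :=
  Matrix.of fun i j => ∑ k : Fin 3, X i k * Y k j

/-- Trace of a `3 × 3` octonion matrix. -/
noncomputable def otrace (X : Matrix (Fin 3) (Fin 3) Oct) : Oct := ∑ i : Fin 3, X i i

/-- Hermitian octonion matrices. -/
def IsOHerm (X : Matrix (Fin 3) (Fin 3) Oct) : Prop := ∀ i j, X j i = star (X i j)

/-- The euclidean inner product `⟨X, Y⟩ = Re trace (X Y)` on octonion matrices. -/
noncomputable def oinner (X Y : Matrix (Fin 3) (Fin 3) Oct) : ℝ :=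
  ∑ i : Fin 3, ∑ j : Fin 3, Oct.re (X i j * Y j i)

/-- The embedding `ℂ → 𝕆` onto the distinguished complex subfield. -/
noncomputable def embC (zc : ℂ) : Oct := ⟨⟨zc.re, zc.im, 0, 0⟩, 0⟩

/-- The `ℂ`-coordinate of an octonion along `1` (w.r.t. the basis `(1, j, ℓ, jℓ)` of
`𝕆` as a complex vector space). -/
def coord0 (u : Oct) : ℂ := ⟨u.a.re, u.a.imI⟩

/-- The `ℂ`-coordinates of an octonion along `(j, ℓ, jℓ)`. -/
noncomputable def coords (u : Oct) : Fin 3 → ℂ :=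
  ![⟨u.a.imJ, -u.a.imK⟩, ⟨u.b.re, -u.b.imI⟩, ⟨u.b.imJ, u.b.imK⟩]

/-- The octonion with given complex coordinates w.r.t. the basis `(1, j, ℓ, jℓ)`. -/
noncomputable def ofCoords (z0 : ℂ) (w : Fin 3 → ℂ) : Oct :=
  ⟨⟨z0.re, z0.im, (w 0).re, -(w 0).im⟩, ⟨(w 1).re, -(w 1).im, (w 2).re, (w 2).im⟩⟩

/-- The action of a complex `3 × 3` matrix (e.g. an element of
`SU(3) ≅ Aut_ℂ(𝕆)`) on an octonion, acting on the coordinates along `(j, ℓ, jℓ)` and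
fixing the complex subfield. -/
noncomputable def actAut (Y : Matrix (Fin 3) (Fin 3) ℂ) (u : Oct) : Oct :=
  ofCoords (coord0 u) (Y.mulVec (coords u))

/-- Entrywise embedding of complex matrices into octonion matrices. -/
noncomputable def embCM (Y : Matrix (Fin 3) (Fin 3) ℂ) : Matrix (Fin 3) (Fin 3) Oct :=
  Matrix.of fun i j => embC (Y i j)

/-- The action of `(Y₁, Y₂) ∈ SU(3) × SU(3)` on octonion matrices: `Y₁` acts entrywise
as a complex-linear automorphism of `𝕆` and `Y₂` by conjugation `X ↦ (Y₂ X) Y₂⁻¹`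
(with `Y₂⁻¹ = Y₂ᴴ` for unitary `Y₂`). -/
noncomputable def cayleyAct (Y₁ Y₂ : Matrix (Fin 3) (Fin 3) ℂ)
    (X : Matrix (Fin 3) (Fin 3) Oct) : Matrix (Fin 3) (Fin 3) Oct :=
  Matrix.of fun i j => actAut Y₁ ((omul3 (omul3 (embCM Y₂) X) (embCM (Matrix.conjTranspose Y₂))) i j)

/-- The Cayley plane `OP²`: idempotent hermitian `3 × 3` octonion matrices of trace 1
(rank-1 projectors). -/
def OP2 : Set (Matrix (Fin 3) (Fin 3) Oct) :=
  {X | IsOHerm X ∧ omul3 X X = X ∧ otrace X = 1}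

/-- The complex projective plane inside `OP²`: the projectors with complex entries. -/
def CP2 : Set (Matrix (Fin 3) (Fin 3) Oct) :=
  {X | X ∈ OP2 ∧ ∀ i j, ∃ zc : ℂ, X i j = embC zc}

/-- The base point `q = diag(0, 0, 1)`. -/
noncomputable def qProj : Matrix (Fin 3) (Fin 3) Oct :=
  Matrix.of fun i j => if i = (2 : Fin 3) ∧ j = (2 : Fin 3) then 1 else 0

/-- The block diagonal `3 × 3` matrix with a `2 × 2` block `W` and lower entry `y`. -/
noncomputable def blockDiag21 (W : Matrix (Fin 2) (Fin 2) ℂ) (y : ℂ) :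
    Matrix (Fin 3) (Fin 3) ℂ :=
  Matrix.of fun i j =>
    if hi : (i : ℕ) < 2 then (if hj : (j : ℕ) < 2 then W ⟨i, hi⟩ ⟨j, hj⟩ else 0)
    else (if (j : ℕ) < 2 then 0 else y)
-- basic Oct lemmas
section OctBasics

@[simp] lemma Oct.add_a (x y : Oct) : (x + y).a = x.a + y.a := rfl
@[simp] lemma Oct.add_b (x y : Oct) : (x + y).b = x.b + y.b := rfl
@[simp] lemma Oct.sub_a (x y : Oct) : (x - y).a = x.a - y.a := rfl
@[simp] lemma Oct.sub_b (x y : Oct) : (x - y).b = x.b - y.b := rfl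
@[simp] lemma Oct.zero_a : (0 : Oct).a = 0 := rfl
@[simp] lemma Oct.zero_b : (0 : Oct).b = 0 := rfl
@[simp] lemma Oct.one_a : (1 : Oct).a = 1 := rfl
@[simp] lemma Oct.one_b : (1 : Oct).b = 0 := rfl
@[simp] lemma Oct.mul_a (x y : Oct) : (x * y).a = x.a * y.a - star y.b * x.b := rfl
@[simp] lemma Oct.mul_b (x y : Oct) : (x * y).b = y.b * x.a + x.b * star y.a := rfl
@[simp] lemma Oct.star_a (x : Oct) : (star x).a = star x.a := rfl
@[simp] lemma Oct.star_b (x : Oct) : (star x).b = -x.b := rfl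

lemma Oct.ext' {x y : Oct} (h1 : x.a = y.a) (h2 : x.b = y.b) : x = y := by
  cases x; cases y; simp_all

@[simp] lemma embC_a_re (z : ℂ) : (embC z).a.re = z.re := rfl
@[simp] lemma embC_a_imI (z : ℂ) : (embC z).a.imI = z.im := rfl
@[simp] lemma embC_a_imJ (z : ℂ) : (embC z).a.imJ = 0 := rfl
@[simp] lemma embC_a_imK (z : ℂ) : (embC z).a.imK = 0 := rfl
@[simp] lemma embC_b (z : ℂ) : (embC z).b = 0 := rfl

lemma embC_add (z w : ℂ) : embC (z + w) = embC z + embC w := by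
  apply Oct.ext' <;> apply Quaternion.ext <;> simp

lemma embC_mul (z w : ℂ) : embC (z * w) = embC z * embC w := by
  apply Oct.ext' <;> apply Quaternion.ext <;>
    simp [Quaternion.re_mul, Quaternion.imI_mul, Quaternion.imJ_mul, Quaternion.imK_mul]

@[simp] lemma embC_zero : embC 0 = 0 := by apply Oct.ext' <;> apply Quaternion.ext <;> simp <;> rfl

@[simp] lemma embC_one : embC 1 = 1 := by apply Oct.ext' <;> apply Quaternion.ext <;> simp <;> rfl

lemma embC_star (z : ℂ) : embC (star z) = star (embC z) := by
  apply Oct.ext' <;> apply Quaternion.ext <;> simp [Quaternion.re_star]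

lemma embC_injective : Function.Injective embC := by
  intro z w h
  have h1 := congrArg (fun o => o.a.re) h
  have h2 := congrArg (fun o => o.a.imI) h
  simp [embC] at h1 h2
  exact Complex.ext h1 h2

end OctBasics
section Bridge

noncomputable def embCHom : ℂ →+ Oct := ⟨⟨embC, embC_zero⟩, embC_add⟩

lemma embC_sum {s : Finset (Fin 3)} (f : Fin 3 → ℂ) :
    embC (∑ k ∈ s, f k) = ∑ k ∈ s, embC (f k) := map_sum embCHom f s

lemma embCM_mul (A B : Matrix (Fin 3) (Fin 3) ℂ) :
    omul3 (embCM A) (embCM B) = embCM (A * B) := by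
  funext i j
  simp only [omul3, embCM, Matrix.of_apply, Matrix.mul_apply, embC_sum]
  exact Finset.sum_congr rfl fun k _ => (embC_mul _ _).symm

lemma coords_embC (z : ℂ) : coords (embC z) = 0 := by
  funext i
  fin_cases i <;> simp [coords, embC] <;> apply Complex.ext <;> simp <;> rfl

lemma actAut_embC (Y : Matrix (Fin 3) (Fin 3) ℂ) (z : ℂ) : actAut Y (embC z) = embC z := by
  simp only [actAut, coords_embC, Matrix.mulVec_zero]
  apply Oct.ext' <;> simp [ofCoords, coord0, embC] <;> ext <;> simp <;> rfl

lemma cayleyAct_embCM (Y₁ Y₂ : Matrix (Fin 3) (Fin 3) ℂ) (P : Matrix (Fin 3) (Fin 3) ℂ) :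
    cayleyAct Y₁ Y₂ (embCM P) = embCM (Y₂ * P * Y₂.conjTranspose) := by
  funext i j
  simp only [cayleyAct, Matrix.of_apply, embCM_mul]
  exact actAut_embC _ _

lemma embCM_injective : Function.Injective embCM := by
  intro A B h
  funext i j
  exact embC_injective (congrFun (congrFun h i) j)

/-- The complex base point. -/
noncomputable def qC : Matrix (Fin 3) (Fin 3) ℂ :=
  Matrix.of fun i j => if i = (2 : Fin 3) ∧ j = (2 : Fin 3) then 1 else 0

lemma qProj_eq : qProj = embCM qC := by
  funext i j
  simp only [qProj, embCM, qC, Matrix.of_apply]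
  split <;> simp

lemma isOHerm_embCM {P : Matrix (Fin 3) (Fin 3) ℂ} (h : P.conjTranspose = P) :
    IsOHerm (embCM P) := by
  intro i j
  simp only [embCM, Matrix.of_apply, ← embC_star]
  congr 1
  have := congrFun (congrFun h j) i
  simpa [Matrix.conjTranspose_apply] using this.symm

lemma otrace_embCM (P : Matrix (Fin 3) (Fin 3) ℂ) : otrace (embCM P) = embC P.trace := by
  simp only [otrace, embCM, Matrix.of_apply, Matrix.trace, embC_sum, Matrix.diag]

end Bridge
section Spectral

open Matrix

lemma herm_entry {P : Matrix (Fin 3) (Fin 3) ℂ} (hH : Pᴴ = P) (i j : Fin 3) :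
    P j i = star (P i j) := by
  have := congrFun (congrFun hH i) j
  simp only [conjTranspose_apply] at this
  rw [← this, star_star]

lemma diag_eq_normSq {P : Matrix (Fin 3) (Fin 3) ℂ} (hH : Pᴴ = P) (hI : P * P = P)
    (i : Fin 3) : P i i = ((∑ j : Fin 3, Complex.normSq (P i j) : ℝ) : ℂ) := by
  have h1 : P i i = ∑ j : Fin 3, P i j * P j i := by
    conv_lhs => rw [← hI]
    simp [Matrix.mul_apply]
  rw [h1]
  push_cast
  refine Finset.sum_congr rfl fun j _ => ?_
  rw [herm_entry hH i j, Complex.star_def, Complex.mul_conj]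

lemma herm_idem_trace_zero {Q : Matrix (Fin 3) (Fin 3) ℂ} (hH : Qᴴ = Q) (hI : Q * Q = Q)
    (ht : Q.trace = 0) : Q = 0 := by
  have htr : Q.trace = ((∑ i : Fin 3, ∑ j : Fin 3, Complex.normSq (Q i j) : ℝ) : ℂ) := by
    rw [Matrix.trace]
    push_cast
    exact Finset.sum_congr rfl fun i _ => by
      rw [Matrix.diag_apply, diag_eq_normSq hH hI i]; push_cast; rfl
  rw [ht] at htr
  have hr : (∑ i : Fin 3, ∑ j : Fin 3, Complex.normSq (Q i j)) = 0 := by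
    exact_mod_cast htr.symm
  have hz : ∀ i ∈ Finset.univ, ∀ j ∈ Finset.univ, Complex.normSq (Q i j) = 0 := by
    have h1 := (Finset.sum_eq_zero_iff_of_nonneg (fun i _ =>
      Finset.sum_nonneg fun j _ => Complex.normSq_nonneg _)).mp hr
    intro i hi j hj
    exact (Finset.sum_eq_zero_iff_of_nonneg fun j _ => Complex.normSq_nonneg _).mp (h1 i hi) j hj
  funext i j
  exact Complex.normSq_eq_zero.mp (hz i (Finset.mem_univ i) j (Finset.mem_univ j))

lemma exists_rank_one {P : Matrix (Fin 3) (Fin 3) ℂ} (hH : Pᴴ = P) (hI : P * P = P)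
    (ht : P.trace = 1) :
    ∃ v : Fin 3 → ℂ, (∑ i : Fin 3, v i * star (v i)) = 1 ∧
      ∀ i j, P i j = v i * star (v j) := by
  have hne : ∃ i : Fin 3, P i i ≠ 0 := by
    by_contra h
    push_neg at h
    have : P.trace = 0 := by simp [Matrix.trace, Matrix.diag_apply, h]
    rw [ht] at this; exact one_ne_zero this
  obtain ⟨i, hi⟩ := hne
  set r : ℝ := ∑ j : Fin 3, Complex.normSq (P i j) with hr
  have hPii : P i i = (r : ℂ) := diag_eq_normSq hH hI i
  have hrpos : 0 < r := by
    rcases lt_or_eq_of_le (Finset.sum_nonneg fun j _ => Complex.normSq_nonneg (P i j)) with h | h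
    · exact h
    · exact absurd (by rw [hPii]; norm_cast; rw [hr, ← h]) hi
  set s : ℝ := Real.sqrt r with hs
  have hspos : 0 < s := Real.sqrt_pos.mpr hrpos
  have hsne : ((s : ℝ) : ℂ) ≠ 0 := by exact_mod_cast hspos.ne'
  have hss : (s : ℂ) * (s : ℂ) = (r : ℂ) := by
    rw [← Complex.ofReal_mul, Real.mul_self_sqrt hrpos.le]
  set v : Fin 3 → ℂ := fun j => P j i / s with hv
  have hPji : ∀ j, P j i = v j * s := fun j => by
    simp only [hv]; rw [div_mul_cancel₀ _ hsne]
  have hstars : star ((s : ℝ) : ℂ) = ((s : ℝ) : ℂ) := by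
    simp [Complex.star_def, Complex.conj_ofReal]
  have hPij : ∀ j, P i j = (s : ℂ) * star (v j) := fun j => by
    rw [herm_entry hH j i]
    simp only [hv]
    rw [star_div₀, hstars, mul_div_cancel₀ _ hsne]
  have hsum : (∑ j : Fin 3, v j * star (v j)) = 1 := by
    have h1 : ∀ j, v j * star (v j) = (Complex.normSq (P j i) : ℂ) / (r : ℂ) := by
      intro j
      simp only [hv, star_div₀, hstars, Complex.star_def]
      rw [div_mul_div_comm, Complex.mul_conj, hss]
    have h2 : ∀ j, Complex.normSq (P j i) = Complex.normSq (P i j) := fun j => by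
      rw [herm_entry hH i j]; simp [Complex.normSq_conj]
    simp only [h1, h2, ← Finset.sum_div]
    rw [div_eq_one_iff_eq (by exact_mod_cast hrpos.ne')]
    norm_cast
  refine ⟨v, hsum, ?_⟩
  have hPv : ∀ j, (∑ k : Fin 3, P j k * v k) = v j := by
    intro j
    have h3 : (∑ k : Fin 3, P j k * P k i) = P j i := by
      have := congrFun (congrFun hI j) i
      simpa [Matrix.mul_apply] using this
    simp only [hv, mul_div_assoc']
    rw [← Finset.sum_div, h3]
  have hvP : ∀ k, (∑ j : Fin 3, star (v j) * P j k) = star (v k) := by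
    intro k
    have h4 : (∑ j : Fin 3, star (v j) * P j k) = star (∑ j : Fin 3, v j * star (P j k)) := by
      rw [star_sum]
      exact Finset.sum_congr rfl fun j _ => by rw [star_mul', star_star]
    rw [h4]
    have h5 : (∑ j : Fin 3, v j * star (P j k)) = ∑ j : Fin 3, P k j * v j := by
      refine Finset.sum_congr rfl fun j _ => ?_
      rw [← herm_entry hH j k]; ring
    rw [h5, hPv k]
  set M : Matrix (Fin 3) (Fin 3) ℂ := P - Matrix.of (fun j k => v j * star (v k)) with hM
  have hMH : Mᴴ = M := by
    funext j k
    simp only [hM, conjTranspose_apply, Matrix.sub_apply, Matrix.of_apply, star_sub, star_mul',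
      star_star]
    rw [herm_entry hH k j]
    ring_nf
  have hMI : M * M = M := by
    funext j k
    simp only [hM, Matrix.mul_apply, Matrix.sub_apply, Matrix.of_apply]
    have expand : ∀ l, (P j l - v j * star (v l)) * (P l k - v l * star (v k)) =
        P j l * P l k - (P j l * v l) * star (v k) - v j * (star (v l) * P l k)
          + v j * (v l * star (v l)) * star (v k) := by intro l; ring
    simp only [expand, Finset.sum_add_distrib, Finset.sum_sub_distrib]
    have e1 : (∑ l : Fin 3, P j l * P l k) = P j k := by
      have := congrFun (congrFun hI j) k
      simpa [Matrix.mul_apply] using this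
    have e2 : (∑ l : Fin 3, P j l * v l * star (v k)) = v j * star (v k) := by
      rw [← Finset.sum_mul, hPv j]
    have e3 : (∑ l : Fin 3, v j * (star (v l) * P l k)) = v j * star (v k) := by
      rw [← Finset.mul_sum, hvP k]
    have e4 : (∑ l : Fin 3, v j * (v l * star (v l)) * star (v k)) = v j * star (v k) := by
      have h6 : (∑ l : Fin 3, v j * (v l * star (v l)) * star (v k))
          = v j * ((∑ l : Fin 3, v l * star (v l)) * star (v k)) := by
        rw [Finset.sum_mul, Finset.mul_sum]
        exact Finset.sum_congr rfl fun l _ => by ring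
      rw [h6, hsum, one_mul]
    rw [e1, e2, e3, e4]
    ring
  have hMt : M.trace = 0 := by
    simp only [hM, Matrix.trace, Matrix.diag_apply, Matrix.sub_apply, Matrix.of_apply,
      Finset.sum_sub_distrib, hsum]
    rw [show (∑ i : Fin 3, P i i) = P.trace from rfl, ht]
    ring
  have hM0 : M = 0 := herm_idem_trace_zero hMH hMI hMt
  intro j k
  have h7 := congrFun (congrFun hM0 j) k
  simp only [hM, Matrix.sub_apply, Matrix.of_apply, Matrix.zero_apply, sub_eq_zero] at h7
  exact h7

end Spectral
section Unitary

open Matrix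

lemma exists_su3_col {v : Fin 3 → ℂ} (hv : (∑ i : Fin 3, v i * star (v i)) = 1) :
    ∃ U ∈ Matrix.specialUnitaryGroup (Fin 3) ℂ, ∀ j, U j 2 = v j := by
  let w : EuclideanSpace ℂ (Fin 3) := WithLp.toLp 2 v
  have hwn : Orthonormal ℂ (Set.restrict {(2 : Fin 3)} (fun _ : Fin 3 => w)) := by
    rw [orthonormal_iff_ite]
    rintro ⟨i, hi⟩ ⟨j, hj⟩
    simp only [Set.mem_singleton_iff] at hi hj
    subst hi; subst hj
    rw [if_pos rfl]
    show (inner ℂ w w : ℂ) = 1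
    rw [PiLp.inner_apply, ← hv]
    exact Finset.sum_congr rfl fun i _ => by
      simp only [RCLike.inner_apply, Complex.star_def]; ring
  obtain ⟨b, hb⟩ := Orthonormal.exists_orthonormalBasis_extension_of_card_eq
    (𝕜 := ℂ) (by simp) hwn
  have hb2 : b 2 = w := hb 2 rfl
  set U0 : Matrix (Fin 3) (Fin 3) ℂ := Matrix.of (fun i j => b j i) with hU0
  have hU0unit : U0 ∈ Matrix.unitaryGroup (Fin 3) ℂ := by
    rw [Matrix.mem_unitaryGroup_iff']
    funext j k
    have horth := (orthonormal_iff_ite (𝕜 := ℂ)).mp b.orthonormal j k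
    rw [PiLp.inner_apply] at horth
    simp only [Matrix.mul_apply, Matrix.star_apply, hU0, Matrix.of_apply]
    rw [show (1 : Matrix (Fin 3) (Fin 3) ℂ) j k = if j = k then 1 else 0 from by
      simp [Matrix.one_apply]]
    rw [← horth]
    exact Finset.sum_congr rfl fun i _ => by
      simp [RCLike.inner_apply, Complex.star_def, mul_comm]
  have hdet : star U0.det * U0.det = 1 := by
    have h1 := Matrix.mem_unitaryGroup_iff'.mp hU0unit
    have := congrArg Matrix.det h1
    rwa [Matrix.det_mul, Matrix.det_one, Matrix.star_eq_conjTranspose,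
      Matrix.det_conjTranspose] at this
  have hdet' : U0.det * star U0.det = 1 := by rw [mul_comm]; exact hdet
  have hdet2 : U0.det * (starRingEnd ℂ) U0.det = 1 := hdet'
  have hdet3 : (starRingEnd ℂ) U0.det * U0.det = 1 := hdet
  set D : Matrix (Fin 3) (Fin 3) ℂ := Matrix.diagonal ![star U0.det, 1, 1] with hD
  have hDunit : D ∈ Matrix.unitaryGroup (Fin 3) ℂ := by
    rw [Matrix.mem_unitaryGroup_iff']
    funext i j
    rw [Matrix.mul_apply]
    fin_cases i <;> fin_cases j <;>
      simp [hD, Fin.sum_univ_three, Matrix.star_apply, Matrix.diagonal, Matrix.one_apply,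
        hdet, hdet', hdet2, hdet3, Complex.star_def]
  refine ⟨U0 * D, ?_, ?_⟩
  · rw [Matrix.mem_specialUnitaryGroup_iff]
    constructor
    · exact mul_mem hU0unit hDunit
    · rw [Matrix.det_mul, hD, Matrix.det_diagonal, Fin.prod_univ_three]
      simp only [Matrix.cons_val_zero, Matrix.cons_val_one, Matrix.head_cons]
      rw [show ![star U0.det, (1:ℂ), 1] 2 = 1 from rfl, mul_one, mul_one]
      exact hdet'
  · intro j
    rw [Matrix.mul_diagonal]
    simp only [hU0, Matrix.of_apply, hb2]
    simp [Matrix.cons_val_two, w]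

end Unitary
section QC

open Matrix

lemma qC_herm : qCᴴ = qC := by
  funext i j
  simp only [Matrix.conjTranspose_apply, qC, Matrix.of_apply]
  by_cases hi : i = 2
  · by_cases hj : j = 2
    · subst hi; subst hj; simp
    · simp [hi, hj]
  · simp [hi]

lemma qC_mul_self : qC * qC = qC := by
  funext i j
  simp only [Matrix.mul_apply, qC, Fin.sum_univ_three, Matrix.of_apply]
  by_cases hi : i = 2 <;> by_cases hj : j = 2 <;> simp [hi, hj]

lemma qC_trace : qC.trace = 1 := by
  simp only [Matrix.trace, Matrix.diag_apply, qC, Fin.sum_univ_three, Matrix.of_apply]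
  simp [show (0:Fin 3) ≠ 2 from by decide, show (1:Fin 3) ≠ 2 from by decide]

lemma mul_qC_mul (U : Matrix (Fin 3) (Fin 3) ℂ) :
    U * qC * Uᴴ = Matrix.of fun j k => U j 2 * star (U k 2) := by
  funext j k
  simp [Matrix.mul_apply, qC, Fin.sum_univ_three, Matrix.conjTranspose_apply, Complex.star_def]

/-- conjugated base point is in `CP2`-data form -/
lemma conj_qC_props {Y : Matrix (Fin 3) (Fin 3) ℂ} (hY : Y ∈ Matrix.unitaryGroup (Fin 3) ℂ) :
    (Y * qC * Yᴴ)ᴴ = Y * qC * Yᴴ ∧ (Y * qC * Yᴴ) * (Y * qC * Yᴴ) = Y * qC * Yᴴ ∧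
      (Y * qC * Yᴴ).trace = 1 := by
  have hYY : Yᴴ * Y = 1 := by
    have := Matrix.mem_unitaryGroup_iff'.mp hY
    rwa [Matrix.star_eq_conjTranspose] at this
  refine ⟨?_, ?_, ?_⟩
  · rw [Matrix.conjTranspose_mul, Matrix.conjTranspose_mul, qC_herm,
      Matrix.conjTranspose_conjTranspose, Matrix.mul_assoc]
  · calc (Y * qC * Yᴴ) * (Y * qC * Yᴴ) = Y * qC * (Yᴴ * Y) * qC * Yᴴ := by
          simp only [Matrix.mul_assoc]
      _ = Y * qC * Yᴴ := by rw [hYY, Matrix.mul_one, Matrix.mul_assoc Y qC qC, qC_mul_self]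
  · rw [Matrix.trace_mul_comm (Y * qC) Yᴴ, ← Matrix.mul_assoc, hYY, Matrix.one_mul, qC_trace]

end QC
section Orbit

open Matrix

lemma one_mem_su3 : (1 : Matrix (Fin 3) (Fin 3) ℂ) ∈ Matrix.specialUnitaryGroup (Fin 3) ℂ := by
  rw [Matrix.mem_specialUnitaryGroup_iff]
  exact ⟨by rw [Matrix.mem_unitaryGroup_iff]; simp, Matrix.det_one⟩

lemma orbit_eq :
    {X : Matrix (Fin 3) (Fin 3) Oct |
        ∃ Y₁ ∈ Matrix.specialUnitaryGroup (Fin 3) ℂ,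
        ∃ Y₂ ∈ Matrix.specialUnitaryGroup (Fin 3) ℂ,
          X = cayleyAct Y₁ Y₂ qProj} = CP2 := by
  ext X
  constructor
  · rintro ⟨Y₁, _, Y₂, hY₂, rfl⟩
    have hu : Y₂ ∈ Matrix.unitaryGroup (Fin 3) ℂ :=
      (Matrix.mem_specialUnitaryGroup_iff.mp hY₂).1
    obtain ⟨hH, hI, ht⟩ := conj_qC_props hu
    rw [qProj_eq, cayleyAct_embCM]
    refine ⟨⟨isOHerm_embCM hH, ?_, ?_⟩, fun i j => ⟨_, rfl⟩⟩
    · rw [embCM_mul, hI]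
    · rw [otrace_embCM, ht, embC_one]
  · rintro ⟨⟨hH, hI, ht⟩, hc⟩
    choose P0 hP using hc
    set P : Matrix (Fin 3) (Fin 3) ℂ := Matrix.of P0 with hPdef
    have hP' : ∀ i j, X i j = embC (P i j) := hP
    have hX : X = embCM P := by funext i j; exact hP' i j
    have hPH : Pᴴ = P := by
      funext i j
      rw [Matrix.conjTranspose_apply]
      have h1 := hH j i
      rw [hX] at h1
      simp only [embCM, Matrix.of_apply] at h1
      rw [← embC_star] at h1
      exact (embC_injective h1).symm
    have hPI : P * P = P := by
      apply embCM_injective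
      rw [← embCM_mul, ← hX, hI, hX]
    have hPt : P.trace = 1 := by
      apply embC_injective
      rw [← otrace_embCM, ← hX, ht, embC_one]
    obtain ⟨v, hv1, hv2⟩ := exists_rank_one hPH hPI hPt
    obtain ⟨U, hU, hUcol⟩ := exists_su3_col hv1
    refine ⟨1, one_mem_su3, U, hU, ?_⟩
    rw [qProj_eq, cayleyAct_embCM, hX]
    refine congrArg embCM ?_
    rw [mul_qC_mul]
    funext i j
    show P i j = U i 2 * star (U j 2)
    rw [hUcol, hUcol, ← hv2]

end Orbit
section Stab

open Matrix

lemma cayleyAct_fix_iff {Y₁ Y₂ : Matrix (Fin 3) (Fin 3) ℂ} :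
    cayleyAct Y₁ Y₂ qProj = qProj ↔ Y₂ * qC * Y₂ᴴ = qC := by
  rw [qProj_eq, cayleyAct_embCM]
  exact ⟨fun h => embCM_injective h, fun h => congrArg embCM h⟩

lemma blockDiag21_explicit (W : Matrix (Fin 2) (Fin 2) ℂ) (y : ℂ) :
    blockDiag21 W y = !![W 0 0, W 0 1, 0; W 1 0, W 1 1, 0; 0, 0, y] := by
  funext i j
  fin_cases i <;> fin_cases j <;> rfl

lemma stab_eq :
    {p : Matrix (Fin 3) (Fin 3) ℂ × Matrix (Fin 3) (Fin 3) ℂ |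
        p.1 ∈ Matrix.specialUnitaryGroup (Fin 3) ℂ ∧
        p.2 ∈ Matrix.specialUnitaryGroup (Fin 3) ℂ ∧
        cayleyAct p.1 p.2 qProj = qProj} =
      {p : Matrix (Fin 3) (Fin 3) ℂ × Matrix (Fin 3) (Fin 3) ℂ |
        p.1 ∈ Matrix.specialUnitaryGroup (Fin 3) ℂ ∧
        ∃ W ∈ Matrix.unitaryGroup (Fin 2) ℂ, p.2 = blockDiag21 W (star W.det)} := by
  ext p
  obtain ⟨Y₁, Y₂⟩ := p
  simp only [Set.mem_setOf_eq]
  constructor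
  · rintro ⟨h1, h2, h3⟩
    refine ⟨h1, ?_⟩
    have hu : Y₂ ∈ Matrix.unitaryGroup (Fin 3) ℂ :=
      (Matrix.mem_specialUnitaryGroup_iff.mp h2).1
    have hYY : Y₂ᴴ * Y₂ = 1 := by
      have := Matrix.mem_unitaryGroup_iff'.mp hu
      rwa [Matrix.star_eq_conjTranspose] at this
    have hq : Y₂ * qC * Y₂ᴴ = qC := cayleyAct_fix_iff.mp h3
    have hcomm : Y₂ * qC = qC * Y₂ := by
      have h4 := congrArg (fun M => M * Y₂) hq
      rw [Matrix.mul_assoc (Y₂ * qC), hYY, Matrix.mul_one] at h4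
      exact h4
    -- entry zeros
    have e02 : Y₂ 0 2 = 0 := by
      have := congrFun (congrFun hcomm 0) 2
      simpa [Matrix.mul_apply, qC, Fin.sum_univ_three] using this
    have e12 : Y₂ 1 2 = 0 := by
      have := congrFun (congrFun hcomm 1) 2
      simpa [Matrix.mul_apply, qC, Fin.sum_univ_three] using this
    have e20 : Y₂ 2 0 = 0 := by
      have := congrFun (congrFun hcomm 2) 0
      simpa [Matrix.mul_apply, qC, Fin.sum_univ_three] using this.symm
    have e21 : Y₂ 2 1 = 0 := by
      have := congrFun (congrFun hcomm 2) 1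
      simpa [Matrix.mul_apply, qC, Fin.sum_univ_three] using this.symm
    set W : Matrix (Fin 2) (Fin 2) ℂ := !![Y₂ 0 0, Y₂ 0 1; Y₂ 1 0, Y₂ 1 1] with hWdef
    have v00 := congrFun (congrFun hYY 0) 0
    have v01 := congrFun (congrFun hYY 0) 1
    have v10 := congrFun (congrFun hYY 1) 0
    have v11 := congrFun (congrFun hYY 1) 1
    simp [Matrix.mul_apply, Fin.sum_univ_three, Matrix.conjTranspose_apply,
      Matrix.one_apply, e20, e21] at v00 v01 v10 v11
    have hWu : Wᴴ * W = 1 := by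
      funext i j
      fin_cases i <;> fin_cases j <;>
        simp [hWdef, Matrix.mul_apply, Fin.sum_univ_two, Matrix.conjTranspose_apply,
          Matrix.one_apply] <;>
        first
          | linear_combination v00
          | linear_combination v01
          | linear_combination v10
          | linear_combination v11
    have hWdetu : star W.det * W.det = 1 := by
      have h6 := congrArg Matrix.det hWu
      rwa [Matrix.det_mul, Matrix.det_conjTranspose, Matrix.det_one] at h6
    have hdet3 : Y₂.det = 1 := (Matrix.mem_specialUnitaryGroup_iff.mp h2).2
    have hdetW : W.det * Y₂ 2 2 = 1 := by
      rw [Matrix.det_fin_three] at hdet3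
      rw [Matrix.det_fin_two]
      simp only [hWdef]
      simp
      rw [e02, e12, e20, e21] at hdet3
      linear_combination hdet3
    have hy : Y₂ 2 2 = star W.det := by
      calc Y₂ 2 2 = (star W.det * W.det) * Y₂ 2 2 := by rw [hWdetu, one_mul]
        _ = star W.det * (W.det * Y₂ 2 2) := by ring
        _ = star W.det := by rw [hdetW, mul_one]
    refine ⟨W, ?_, ?_⟩
    · rw [Matrix.mem_unitaryGroup_iff', Matrix.star_eq_conjTranspose]
      exact hWu
    · rw [blockDiag21_explicit]
      funext i j
      fin_cases i <;> fin_cases j <;>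
        simp [hWdef, e02, e12, e20, e21, hy]
  · rintro ⟨h1, W, hW, hp2⟩
    have hWu : Wᴴ * W = 1 := by
      have := Matrix.mem_unitaryGroup_iff'.mp hW
      rwa [Matrix.star_eq_conjTranspose] at this
    have hWu' : W * Wᴴ = 1 := by
      have := Matrix.mem_unitaryGroup_iff.mp hW
      rwa [Matrix.star_eq_conjTranspose] at this
    have hdW : star W.det * W.det = 1 := by
      have h6 := congrArg Matrix.det hWu
      rwa [Matrix.det_mul, Matrix.det_conjTranspose, Matrix.det_one] at h6
    have hdW' : W.det * star W.det = 1 := by rw [mul_comm]; exact hdW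
    have hdWa : (starRingEnd ℂ) W.det * W.det = 1 := hdW
    have hdWb : W.det * (starRingEnd ℂ) W.det = 1 := hdW'
    set B : Matrix (Fin 3) (Fin 3) ℂ := blockDiag21 W (star W.det) with hBdef
    have hB : B = !![W 0 0, W 0 1, 0; W 1 0, W 1 1, 0; 0, 0, star W.det] :=
      blockDiag21_explicit W _
    -- unitarity equations of W entrywise
    have u00 := congrFun (congrFun hWu 0) 0
    have u01 := congrFun (congrFun hWu 0) 1
    have u10 := congrFun (congrFun hWu 1) 0
    have u11 := congrFun (congrFun hWu 1) 1
    simp [Matrix.mul_apply, Fin.sum_univ_two, Matrix.conjTranspose_apply,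
      Matrix.one_apply] at u00 u01 u10 u11
    have hBunit : B ∈ Matrix.unitaryGroup (Fin 3) ℂ := by
      rw [Matrix.mem_unitaryGroup_iff', Matrix.star_eq_conjTranspose]
      funext i j
      fin_cases i <;> fin_cases j <;>
        simp [hB, Matrix.mul_apply, Fin.sum_univ_three, Matrix.conjTranspose_apply,
          Matrix.one_apply, Complex.star_def] <;>
        first
          | linear_combination u00
          | linear_combination u01
          | linear_combination u10
          | linear_combination u11
          | linear_combination hdW
          | linear_combination hdW'
          | linear_combination hdWa
          | linear_combination hdWb
    have hBdet : B.det = 1 := by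
      rw [hB, Matrix.det_fin_three]
      simp [Complex.star_def]
      first
        | linear_combination star W.det * (Matrix.det_fin_two W).symm + hdW'
        | linear_combination (starRingEnd ℂ) W.det * (Matrix.det_fin_two W).symm + hdWb
        | linear_combination star W.det * (Matrix.det_fin_two W).symm + hdWb
    refine ⟨h1, ?_, ?_⟩
    · rw [hp2, Matrix.mem_specialUnitaryGroup_iff]
      exact ⟨hBunit, hBdet⟩
    · rw [hp2]
      refine cayleyAct_fix_iff.mpr ?_
      rw [mul_qC_mul]
      funext i j
      fin_cases i <;> fin_cases j <;>
        simp [hB, qC, Complex.star_def] <;>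
          first
            | rfl
            | linear_combination hdWa
            | linear_combination hdWb
  
end Stab

/-- For the action of `K = SU(3) × SU(3)` on the Cayley plane `OP²`
(first factor acting entrywise as `Aut_ℂ(𝕆)`, second factor by conjugation), the orbit
of the projector `q = diag(0,0,1)` is the complex projective plane `ℂP² ⊆ OP²`, and the
stabilizer `K_q ≅ SU(3) × U(2)` consists of the pairs
`(Y₁, diag-block(Y₂, conj (det Y₂)))` with `Y₁ ∈ SU(3)`, `Y₂ ∈ U(2)`. -/
theorem statement19 :
    {X : Matrix (Fin 3) (Fin 3) Oct |
        ∃ Y₁ ∈ Matrix.specialUnitaryGroup (Fin 3) ℂ,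
        ∃ Y₂ ∈ Matrix.specialUnitaryGroup (Fin 3) ℂ,
          X = cayleyAct Y₁ Y₂ qProj} = CP2 ∧
    {p : Matrix (Fin 3) (Fin 3) ℂ × Matrix (Fin 3) (Fin 3) ℂ |
        p.1 ∈ Matrix.specialUnitaryGroup (Fin 3) ℂ ∧
        p.2 ∈ Matrix.specialUnitaryGroup (Fin 3) ℂ ∧
        cayleyAct p.1 p.2 qProj = qProj} =
      {p : Matrix (Fin 3) (Fin 3) ℂ × Matrix (Fin 3) (Fin 3) ℂ |
        p.1 ∈ Matrix.specialUnitaryGroup (Fin 3) ℂ ∧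
        ∃ W ∈ Matrix.unitaryGroup (Fin 2) ℂ, p.2 = blockDiag21 W (star W.det)} :=
  ⟨orbit_eq, stab_eq⟩
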